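/- arXiv:1208.1945 — 4 statements merged into one kernel-verified Lean document; each statement's English description precedes it below -/
import Mathlib

section
/- Let K be a field with a valuation v as below, let s = diag(s₁,…,s_m) with s₁,…,s_m ∈ K^×, and let u ∈ GL_m(K). Then for every 0 ≤ j ≤ m, the coefficient of X^{m−j} in the characteristic polynomial det(X·1_m − s·u) of the matrix s·u has valuation at least j·( min_{1≤i≤m} v(sᵢ) + v_min(u) ). -/
/-- `v_min(M) = min_{i,j} v(M_{ij})` for a matrix `M`. -/
noncomputable def vminMatrix {K : Type*} [Field K] {m : ℕ} [NeZero m]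
    (v : K → WithTop ℝ) (M : Matrix (Fin m) (Fin m) K) : WithTop ℝ :=
  Finset.univ.inf' Finset.univ_nonempty fun q : Fin m × Fin m => v (M q.1 q.2)

/-- `min_{1 ≤ i ≤ m} v(s_i)`. -/
noncomputable def vminVec {K : Type*} [Field K] {m : ℕ} [NeZero m]
    (v : K → WithTop ℝ) (s : Fin m → K) : WithTop ℝ :=
  Finset.univ.inf' Finset.univ_nonempty fun i : Fin m => v (s i)

section Aux

variable {K : Type*} [Field K] (v : K → WithTop ℝ)

lemma aux_v_zero (hv_top : ∀ x : K, v x = ⊤ ↔ x = 0) : v 0 = ⊤ := (hv_top 0).2 rfl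

lemma aux_v_one (hv_top : ∀ x : K, v x = ⊤ ↔ x = 0)
    (hv_mul : ∀ x y : K, v (x * y) = v x + v y) : v (1 : K) = 0 := by
  have h := hv_mul 1 1
  rw [mul_one] at h
  have hne : v (1 : K) ≠ ⊤ := fun h => one_ne_zero ((hv_top 1).1 h)
  lift v (1 : K) to ℝ using hne with a ha
  have : a = a + a := by exact_mod_cast h
  have : a = 0 := by linarith
  exact_mod_cast congrArg (fun r : ℝ => (r : WithTop ℝ)) this

lemma aux_v_neg (hv_top : ∀ x : K, v x = ⊤ ↔ x = 0)
    (hv_mul : ∀ x y : K, v (x * y) = v x + v y) (x : K) : v (-x) = v x := by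
  have hm1 : v (-1 : K) = 0 := by
    have h := hv_mul (-1) (-1)
    rw [neg_mul_neg, one_mul, aux_v_one v hv_top hv_mul] at h
    have hne : v (-1 : K) ≠ ⊤ := fun h => (neg_ne_zero.mpr one_ne_zero) ((hv_top (-1)).1 h)
    lift v (-1 : K) to ℝ using hne with a ha
    have : (0 : ℝ) = a + a := by exact_mod_cast h
    have : a = 0 := by linarith
    exact_mod_cast congrArg (fun r : ℝ => (r : WithTop ℝ)) this
  calc v (-x) = v ((-1) * x) := by rw [neg_one_mul]
    _ = v (-1 : K) + v x := hv_mul _ _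
    _ = v x := by rw [hm1, zero_add]

lemma aux_v_sum (hv_top : ∀ x : K, v x = ⊤ ↔ x = 0)
    (hv_add : ∀ x y : K, min (v x) (v y) ≤ v (x + y))
    {ι : Type*} (t : Finset ι) (f : ι → K) (c : WithTop ℝ)
    (h : ∀ i ∈ t, c ≤ v (f i)) : c ≤ v (∑ i ∈ t, f i) := by
  induction t using Finset.cons_induction with
  | empty => simp [aux_v_zero v hv_top]
  | cons a t ha ih =>
    rw [Finset.sum_cons]
    refine le_trans ?_ (hv_add (f a) (∑ i ∈ t, f i))
    exact le_min (h a (Finset.mem_cons_self a t))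
      (ih fun i hi => h i (Finset.mem_cons_of_mem hi))

/-- The key predicate: `p` has degree at most `d` and the coefficient of `X^n`
has valuation at least `(d - n) • c`. -/
def QP (c : WithTop ℝ) (d : ℕ) (p : Polynomial K) : Prop :=
  ∀ n : ℕ, (d < n → p.coeff n = 0) ∧ (d - n) • c ≤ v (p.coeff n)

lemma QP_one (hv_top : ∀ x : K, v x = ⊤ ↔ x = 0)
    (hv_mul : ∀ x y : K, v (x * y) = v x + v y) (c : WithTop ℝ) :
    QP v c 0 (1 : Polynomial K) := by
  intro n
  rcases Nat.eq_zero_or_pos n with hn | hn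
  · subst hn
    simp [aux_v_one v hv_top hv_mul]
  · constructor
    · intro _; simp [Polynomial.coeff_one, hn.ne']
    · have : (1 : Polynomial K).coeff n = 0 := by
        simp [Polynomial.coeff_one, hn.ne']
      simp [this, aux_v_zero v hv_top]

lemma QP_mul (hv_top : ∀ x : K, v x = ⊤ ↔ x = 0)
    (hv_mul : ∀ x y : K, v (x * y) = v x + v y)
    (hv_add : ∀ x y : K, min (v x) (v y) ≤ v (x + y))
    {c : WithTop ℝ} {d e : ℕ} {p q : Polynomial K}
    (hp : QP v c d p) (hq : QP v c e q) : QP v c (d + e) (p * q) := by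
  intro n
  rw [Polynomial.coeff_mul]
  constructor
  · intro hn
    refine Finset.sum_eq_zero fun x hx => ?_
    rw [Finset.HasAntidiagonal.mem_antidiagonal] at hx
    rcases lt_or_ge d x.1 with h1 | h1
    · rw [(hp x.1).1 h1, zero_mul]
    · rw [(hq x.2).1 (by omega), mul_zero]
  · refine aux_v_sum v hv_top hv_add _ _ _ fun x hx => ?_
    rw [Finset.HasAntidiagonal.mem_antidiagonal] at hx
    rw [hv_mul]
    rcases lt_or_ge d x.1 with h1 | h1
    · rw [(hp x.1).1 h1, aux_v_zero v hv_top, top_add]; exact le_top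
    rcases lt_or_ge e x.2 with h2 | h2
    · rw [(hq x.2).1 h2, aux_v_zero v hv_top, add_top]; exact le_top
    have key : (d + e - n) = (d - x.1) + (e - x.2) := by omega
    rw [key, add_smul]
    exact add_le_add (hp x.1).2 (hq x.2).2

lemma QP_prod (hv_top : ∀ x : K, v x = ⊤ ↔ x = 0)
    (hv_mul : ∀ x y : K, v (x * y) = v x + v y)
    (hv_add : ∀ x y : K, min (v x) (v y) ≤ v (x + y))
    {ι : Type*} (t : Finset ι) (f : ι → Polynomial K) (d : ι → ℕ) (c : WithTop ℝ)
    (h : ∀ i ∈ t, QP v c (d i) (f i)) :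
    QP v c (∑ i ∈ t, d i) (∏ i ∈ t, f i) := by
  induction t using Finset.cons_induction with
  | empty => simpa using QP_one v hv_top hv_mul c
  | cons a t ha ih =>
    rw [Finset.sum_cons, Finset.prod_cons]
    exact QP_mul v hv_top hv_mul hv_add (h a (Finset.mem_cons_self a t))
      (ih fun i hi => h i (Finset.mem_cons_of_mem hi))

lemma QP_sum (hv_top : ∀ x : K, v x = ⊤ ↔ x = 0)
    (hv_add : ∀ x y : K, min (v x) (v y) ≤ v (x + y))
    {ι : Type*} (t : Finset ι) (f : ι → Polynomial K) (d : ℕ) (c : WithTop ℝ)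
    (h : ∀ i ∈ t, QP v c d (f i)) :
    QP v c d (∑ i ∈ t, f i) := by
  intro n
  rw [Polynomial.finset_sum_coeff]
  constructor
  · intro hn
    exact Finset.sum_eq_zero fun i hi => (h i hi n).1 hn
  · exact aux_v_sum v hv_top hv_add _ _ _ fun i hi => (h i hi n).2

lemma QP_sign_smul (hv_top : ∀ x : K, v x = ⊤ ↔ x = 0)
    (hv_mul : ∀ x y : K, v (x * y) = v x + v y)
    {c : WithTop ℝ} {d : ℕ} {p : Polynomial K} (ε : ℤˣ)
    (hp : QP v c d p) : QP v c d (ε • p) := by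
  rcases Int.units_eq_one_or ε with h | h <;> subst h
  · simpa using hp
  · intro n
    have hc : ((-1 : ℤˣ) • p).coeff n = -(p.coeff n) := by
      simp [Polynomial.coeff_smul]
    rw [hc]
    refine ⟨fun hn => by rw [(hp n).1 hn, neg_zero], ?_⟩
    rw [aux_v_neg v hv_top hv_mul]
    exact (hp n).2

end Aux

theorem stmt1 {K : Type*} [Field K] {m : ℕ} [NeZero m]
    (v : K → WithTop ℝ)
    (hv_top : ∀ x : K, v x = ⊤ ↔ x = 0)
    (hv_mul : ∀ x y : K, v (x * y) = v x + v y)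
    (hv_add : ∀ x y : K, min (v x) (v y) ≤ v (x + y))
    (s : Fin m → K) (hs : ∀ i, s i ≠ 0)
    (u : (Matrix (Fin m) (Fin m) K)ˣ)
    (j : ℕ) (hj : j ≤ m) :
    j • (vminVec v s + vminMatrix v (u : Matrix (Fin m) (Fin m) K)) ≤
      v ((Matrix.charpoly (Matrix.diagonal s * (u : Matrix (Fin m) (Fin m) K))).coeff (m - j)) := by
  set U : Matrix (Fin m) (Fin m) K := (u : Matrix (Fin m) (Fin m) K)
  set M : Matrix (Fin m) (Fin m) K := Matrix.diagonal s * U with hM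
  set c : WithTop ℝ := vminVec v s + vminMatrix v U with hc
  -- every entry of M has valuation at least c
  have hentry : ∀ i k : Fin m, c ≤ v (M i k) := by
    intro i k
    have hMik : M i k = s i * U i k := by simp [hM, Matrix.diagonal_mul]
    rw [hMik, hv_mul]
    refine add_le_add ?_ ?_
    · exact Finset.inf'_le _ (Finset.mem_univ i)
    · exact Finset.inf'_le (fun q : Fin m × Fin m => v (U q.1 q.2))
        (Finset.mem_univ (i, k))
  -- each entry of the charmatrix satisfies QP with weight 1
  have hcharm : ∀ i k : Fin m, QP v c 1 (Matrix.charmatrix M i k) := by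
    intro i k
    rcases eq_or_ne i k with rfl | hik
    · rw [Matrix.charmatrix_apply_eq]
      intro n
      match n with
      | 0 =>
        refine ⟨by omega, ?_⟩
        have : (Polynomial.X - Polynomial.C (M i i)).coeff 0 = -(M i i) := by
          simp
        rw [this, aux_v_neg v hv_top hv_mul, Nat.sub_zero, one_smul]
        exact hentry i i
      | 1 =>
        refine ⟨by omega, ?_⟩
        have : (Polynomial.X - Polynomial.C (M i i)).coeff 1 = 1 := by
          simp
        rw [this, aux_v_one v hv_top hv_mul]
        simp
      | (n + 2) =>
        have hz : (Polynomial.X - Polynomial.C (M i i)).coeff (n + 2) = 0 := by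
          rw [Polynomial.coeff_sub, Polynomial.coeff_X, Polynomial.coeff_C]
          simp
        refine ⟨fun _ => hz, ?_⟩
        rw [hz, aux_v_zero v hv_top]
        exact le_top
    · rw [Matrix.charmatrix_apply_ne _ _ _ hik]
      intro n
      match n with
      | 0 =>
        refine ⟨by omega, ?_⟩
        have : (-Polynomial.C (M i k)).coeff 0 = -(M i k) := by simp
        rw [this, aux_v_neg v hv_top hv_mul, Nat.sub_zero, one_smul]
        exact hentry i k
      | (n + 1) =>
        have hz : (-Polynomial.C (M i k)).coeff (n + 1) = 0 := by simp
        refine ⟨fun _ => hz, ?_⟩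
        rw [hz, aux_v_zero v hv_top]
        exact le_top
  -- the characteristic polynomial satisfies QP with weight m
  have hQ : QP v c m (Matrix.charpoly M) := by
    rw [Matrix.charpoly, Matrix.det_apply]
    refine QP_sum v hv_top hv_add _ _ _ _ fun σ _ => ?_
    refine QP_sign_smul v hv_top hv_mul _ ?_
    have := QP_prod v hv_top hv_mul hv_add Finset.univ
      (fun i => Matrix.charmatrix M (σ i) i) (fun _ => 1) c
      (fun i _ => hcharm (σ i) i)
    simpa using this
  have := (hQ (m - j)).2
  have hmj : m - (m - j) = j := by omega
  rwa [hmj] at this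
end

section
/- Let K be a field with a valuation v as below, let s = diag(s₁,…,s_m) with s₁,…,s_m ∈ K^×, and let u ∈ GL_m(K). Then every eigenvalue λ ∈ K of the matrix s·u (i.e., every root λ ∈ K of the characteristic polynomial of s·u) satisfies v_min(u) + min_{1≤i≤m} v(sᵢ) ≤ v(λ) ≤ −v_min(u^{−1}) + max_{1≤i≤m} v(sᵢ). -/
/-- `max_{1 ≤ i ≤ m} v(s_i)`. -/
noncomputable def vmaxVec {K : Type*} [Field K] {m : ℕ} [NeZero m]
    (v : K → WithTop ℝ) (s : Fin m → K) : WithTop ℝ :=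
  Finset.univ.sup' Finset.univ_nonempty fun i : Fin m => v (s i)

/-- If `c ≤ v (f i)` for all `i` in a finite set, then `c ≤ v (∑ f i)`. -/
lemma le_v_sum {K : Type*} [Field K] (v : K → WithTop ℝ)
    (hv_top : ∀ x : K, v x = ⊤ ↔ x = 0)
    (hv_add : ∀ x y : K, min (v x) (v y) ≤ v (x + y))
    {ι : Type*} (S : Finset ι) (f : ι → K) (c : WithTop ℝ)
    (h : ∀ i ∈ S, c ≤ v (f i)) : c ≤ v (∑ i ∈ S, f i) := by
  induction S using Finset.cons_induction with
  | empty => simp [(hv_top 0).2 rfl]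
  | cons a S ha ih =>
    rw [Finset.sum_cons]
    refine le_trans ?_ (hv_add _ _)
    exact le_min (h a (Finset.mem_cons_self a S))
      (ih fun i hi => h i (Finset.mem_cons_of_mem hi))

/-- A root of the characteristic polynomial admits an eigenvector. -/
lemma eig_vec {K : Type*} [Field K] {m : ℕ}
    (A : Matrix (Fin m) (Fin m) K) (lam : K)
    (hlam : (Matrix.charpoly A).IsRoot lam) :
    ∃ x : Fin m → K, x ≠ 0 ∧ A.mulVec x = lam • x := by
  have hdet : (lam • (1 : Matrix (Fin m) (Fin m) K) - A).det = 0 := by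
    have h := hlam
    rw [Polynomial.IsRoot, Matrix.charpoly, ← Polynomial.coe_evalRingHom,
      RingHom.map_det] at h
    convert h using 2
    ext i j
    by_cases hij : i = j <;>
      simp [hij, Matrix.charmatrix_apply, Matrix.diagonal_apply, Matrix.one_apply,
        Matrix.smul_apply]
  obtain ⟨x, hx0, hx⟩ := (Matrix.exists_mulVec_eq_zero_iff).2 hdet
  refine ⟨x, hx0, ?_⟩
  rw [Matrix.sub_mulVec, Matrix.smul_mulVec, Matrix.one_mulVec,
    sub_eq_zero] at hx
  exact hx.symm

/-- Every eigenvalue `λ ∈ K` of `s·u` (a root of the characteristic polynomial of `s·u`)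
satisfies `v_min(u) + min_i v(s_i) ≤ v(λ)` and `v(λ) ≤ -v_min(u⁻¹) + max_i v(s_i)`, the
latter inequality being written in the equivalent form `v(λ) + v_min(u⁻¹) ≤ max_i v(s_i)`. -/
theorem stmt2 {K : Type*} [Field K] {m : ℕ} [NeZero m]
    (v : K → WithTop ℝ)
    (hv_top : ∀ x : K, v x = ⊤ ↔ x = 0)
    (hv_mul : ∀ x y : K, v (x * y) = v x + v y)
    (hv_add : ∀ x y : K, min (v x) (v y) ≤ v (x + y))
    (s : Fin m → K) (hs : ∀ i, s i ≠ 0)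
    (u : (Matrix (Fin m) (Fin m) K)ˣ)
    (lam : K)
    (hlam : (Matrix.charpoly (Matrix.diagonal s * (u : Matrix (Fin m) (Fin m) K))).IsRoot lam) :
    vminMatrix v (u : Matrix (Fin m) (Fin m) K) + vminVec v s ≤ v lam ∧
    v lam + vminMatrix v ((u⁻¹ : (Matrix (Fin m) (Fin m) K)ˣ) : Matrix (Fin m) (Fin m) K) ≤
      vmaxVec v s := by
  set U : Matrix (Fin m) (Fin m) K := (u : Matrix (Fin m) (Fin m) K) with hU
  set Ui : Matrix (Fin m) (Fin m) K := ((u⁻¹ : (Matrix (Fin m) (Fin m) K)ˣ) :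
    Matrix (Fin m) (Fin m) K) with hUi
  -- v 1 = 0
  have hv1 : v (1 : K) = 0 := by
    have hne : v (1 : K) ≠ ⊤ := fun h => one_ne_zero ((hv_top 1).1 h)
    have h := hv_mul 1 1
    rw [one_mul] at h
    have h2 : v (1 : K) + 0 = v (1 : K) + v (1 : K) := by rw [add_zero]; exact h
    exact (WithTop.add_left_cancel hne h2).symm
  -- eigenvector
  obtain ⟨x, hx0, hx⟩ := eig_vec (Matrix.diagonal s * U) lam hlam
  -- index minimizing v (x i)
  obtain ⟨i, -, hi⟩ := Finset.exists_min_image (Finset.univ : Finset (Fin m))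
    (fun j => v (x j)) Finset.univ_nonempty
  have hi' : ∀ j, v (x i) ≤ v (x j) := fun j => hi j (Finset.mem_univ j)
  obtain ⟨j0, hj0⟩ := Function.ne_iff.1 hx0
  have hxi_ne : v (x i) ≠ ⊤ := by
    intro h
    exact hj0 ((hv_top _).1 (top_le_iff.1 (h ▸ hi' j0)))
  constructor
  · -- lower bound
    have key : vminMatrix v U + vminVec v s + v (x i) ≤ v lam + v (x i) := by
      rw [← hv_mul lam (x i)]
      have heq : lam * x i = ∑ j, s i * U i j * x j := by
        have := congrFun hx i
        simp only [Matrix.mulVec, dotProduct, Pi.smul_apply, smul_eq_mul,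
          Matrix.diagonal_mul] at this
        exact this.symm
      rw [heq]
      refine le_v_sum v hv_top hv_add _ _ _ (fun j _ => ?_)
      rw [hv_mul, hv_mul]
      calc vminMatrix v U + vminVec v s + v (x i)
          ≤ v (U i j) + v (s i) + v (x j) := by
            refine add_le_add (add_le_add ?_ ?_) (hi' j)
            · exact Finset.inf'_le _ (Finset.mem_univ (i, j))
            · exact Finset.inf'_le _ (Finset.mem_univ i)
        _ = v (s i) + v (U i j) + v (x j) := by rw [add_comm (v (U i j)) (v (s i))]
    exact (WithTop.add_le_add_iff_right hxi_ne).1 key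
  · -- upper bound
    have hUiU : Ui * U = 1 := by
      rw [hU, hUi, ← Units.val_mul, inv_mul_cancel, Units.val_one]
    have hUx : ∀ j, U.mulVec x j = (s j)⁻¹ * (lam * x j) := by
      intro j
      have h := congrFun hx j
      simp only [Matrix.mulVec, dotProduct, Pi.smul_apply, smul_eq_mul,
        Matrix.diagonal_mul, mul_assoc] at h
      rw [← Finset.mul_sum] at h
      show ∑ k, U j k * x k = (s j)⁻¹ * (lam * x j)
      rw [eq_inv_mul_iff_mul_eq₀ (hs j)]
      exact h
    have hxeq : x i = ∑ j, Ui i j * ((s j)⁻¹ * (lam * x j)) := by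
      have hUU : Ui.mulVec (U.mulVec x) = x := by
        rw [Matrix.mulVec_mulVec, hUiU, Matrix.one_mulVec]
      have h2 := congrFun hUU i
      rw [show U.mulVec x = fun j => (s j)⁻¹ * (lam * x j) from funext hUx] at h2
      simp only [Matrix.mulVec, dotProduct] at h2
      exact h2.symm
    set T : Fin m → K := fun j => Ui i j * ((s j)⁻¹ * (lam * x j)) with hT
    -- per-term bound
    have claim : ∀ j, v lam + vminMatrix v Ui + v (x i) ≤ v (T j) + vmaxVec v s := by
      intro j
      have hvT : v (T j) = v (Ui i j) + (v ((s j)⁻¹) + (v lam + v (x j))) := by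
        rw [hT]; simp only [hv_mul]
      have hsj : v ((s j)⁻¹) + v (s j) = 0 := by
        rw [← hv_mul, inv_mul_cancel₀ (hs j), hv1]
      have hsj_le : v (s j) ≤ vmaxVec v s := by
        unfold vmaxVec
        exact Finset.le_sup' (fun i => v (s i)) (Finset.mem_univ j)
      calc v lam + vminMatrix v Ui + v (x i)
          ≤ v lam + v (Ui i j) + v (x j) :=
            add_le_add (add_le_add le_rfl (Finset.inf'_le _ (Finset.mem_univ (i, j)))) (hi' j)
        _ = v (Ui i j) + (v ((s j)⁻¹) + (v lam + v (x j))) + v (s j) := by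
            have h0 : v (Ui i j) + (v ((s j)⁻¹) + (v lam + v (x j))) + v (s j)
                = v lam + v (Ui i j) + v (x j) + (v ((s j)⁻¹) + v (s j)) := by abel
            rw [h0, hsj, add_zero]
        _ ≤ v (Ui i j) + (v ((s j)⁻¹) + (v lam + v (x j))) + vmaxVec v s :=
            add_le_add le_rfl hsj_le
        _ = v (T j) + vmaxVec v s := by rw [hvT]
    set c0 : WithTop ℝ := Finset.univ.inf' Finset.univ_nonempty (fun j => v (T j)) with hc0
    have hc0_le : c0 ≤ v (x i) := by
      rw [hxeq]
      exact le_v_sum v hv_top hv_add _ _ _ (fun j _ =>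
        Finset.inf'_le _ (Finset.mem_univ j))
    obtain ⟨jm, -, hjm⟩ := Finset.exists_mem_eq_inf' Finset.univ_nonempty (fun j => v (T j))
    have key : v lam + vminMatrix v Ui + v (x i) ≤ v (x i) + vmaxVec v s := by
      calc v lam + vminMatrix v Ui + v (x i) ≤ v (T jm) + vmaxVec v s := claim jm
        _ = c0 + vmaxVec v s := by rw [hc0, hjm]
        _ ≤ v (x i) + vmaxVec v s := add_le_add hc0_le le_rfl
    rw [add_comm (v (x i)) (vmaxVec v s)] at key
    exact (WithTop.add_le_add_iff_right hxi_ne).1 key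
end

section
/- Let p be a prime, F a finite extension of ℚ_p, and E a finite Galois extension of F. Then for every σ ∈ Gal(E/F) with σ ≠ 1 there exists x ∈ 𝒪_E such that v_E(σ(x) − x) ≤ [E:F]·(1 + e_{F/ℚ_p}·log_p [E:F]) − 1. Equivalently, the i-th ramification group Gal(E/F)_i in lower numbering is trivial for every integer i ≥ [E:F]·(1 + e_{F/ℚ_p}·log_p [E:F]) − 1. -/
open Finset IsLocalRing

section aux
variable {A B : Type*} [CommSemiring A] [CommRing B] [Algebra A B]

lemma aux_pow_apply (τ : B ≃ₐ[A] B) (k : ℕ) (x : B) : τ ((τ ^ k) x) = (τ ^ (k+1)) x := by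
  rw [pow_succ']; rfl

lemma tele_f {M : Type*} [AddCommGroup M] (f : ℕ → M) (m : ℕ) (hfm : f m = f 0) :
    (∑ k ∈ range m, k • f (k+1)) - ∑ k ∈ range m, k • f k
      = m • f 0 - ∑ k ∈ range m, f k := by
  have h1 := Finset.sum_range_succ' (fun k => k • f k) m
  have h2 := Finset.sum_range_succ (fun k => k • f k) m
  have h3 := Finset.sum_range_succ' f m
  have h4 := Finset.sum_range_succ f m
  have h5 : ∑ k ∈ range m, (k+1) • f (k+1)
      = (∑ k ∈ range m, k • f (k+1)) + ∑ k ∈ range m, f (k+1) := by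
    rw [← Finset.sum_add_distrib]
    exact Finset.sum_congr rfl fun k _ => succ_nsmul (f (k+1)) k
  have h6 : (∑ k ∈ range m, (k+1) • f (k+1)) = (∑ k ∈ range m, k • f k) + m • f m := by
    have := h1.symm.trans h2
    simpa using this
  have h7 : (∑ k ∈ range m, f (k+1)) + f 0 = (∑ k ∈ range m, f k) + f m :=
    h3.symm.trans h4
  rw [hfm] at h6 h7
  have h9 := h5.symm.trans h6
  have h8 : (∑ k ∈ range m, f (k+1)) = ∑ k ∈ range m, f k := add_right_cancel h7
  rw [h8] at h9
  linear_combination (norm := abel1) h9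

lemma tele_tau (τ : B ≃ₐ[A] B) {m : ℕ} (hm : τ ^ m = 1) (x : B) :
    τ (∑ k ∈ range m, k • ((τ ^ k) x)) - (∑ k ∈ range m, k • ((τ ^ k) x))
      = m • x - ∑ k ∈ range m, (τ ^ k) x := by
  have hmap : τ (∑ k ∈ range m, k • ((τ ^ k) x)) = ∑ k ∈ range m, k • ((τ ^ (k+1)) x) := by
    rw [map_sum]
    exact Finset.sum_congr rfl fun k _ => by rw [map_nsmul, aux_pow_apply]
  rw [hmap]
  have h0 : ((τ ^ m) x) = ((τ ^ 0) x) := by rw [hm]; rfl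
  simpa using tele_f (fun k => (τ ^ k) x) m h0

lemma trace_fixed (τ : B ≃ₐ[A] B) {m : ℕ} (hm : τ ^ m = 1) (x : B) :
    τ (∑ k ∈ range m, (τ ^ k) x) = ∑ k ∈ range m, (τ ^ k) x := by
  have hmap : τ (∑ k ∈ range m, (τ ^ k) x) = ∑ k ∈ range m, (τ ^ (k+1)) x := by
    rw [map_sum]; exact Finset.sum_congr rfl fun k _ => aux_pow_apply τ k x
  rw [hmap]
  have h0 : ((τ ^ m) x) = ((τ ^ 0) x) := by rw [hm]; rfl
  have h7 := (Finset.sum_range_succ' (fun k => (τ ^ k) x) m).symm.trans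
    (Finset.sum_range_succ (fun k => (τ ^ k) x) m)
  rw [h0] at h7
  exact add_right_cancel h7

lemma prod_fixed [IsDomain B] (τ : B ≃ₐ[A] B) {m : ℕ} (hm : τ ^ m = 1) (x : B) (hx : x ≠ 0) :
    τ (∏ k ∈ range m, (τ ^ k) x) = ∏ k ∈ range m, (τ ^ k) x := by
  have hmap : τ (∏ k ∈ range m, (τ ^ k) x) = ∏ k ∈ range m, (τ ^ (k+1)) x := by
    rw [map_prod]; exact Finset.prod_congr rfl fun k _ => aux_pow_apply τ k x
  rw [hmap]
  have h0 : ((τ ^ m) x) = ((τ ^ 0) x) := by rw [hm]; rfl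
  have h7 := (Finset.prod_range_succ' (fun k => (τ ^ k) x) m).symm.trans
    (Finset.prod_range_succ (fun k => (τ ^ k) x) m)
  rw [h0] at h7
  have hx0 : ((τ ^ 0) x) ≠ 0 := by simpa using hx
  exact mul_right_cancel₀ hx0 h7

lemma prod_conj_eq_unit_mul_pow [IsDomain B] [IsDiscreteValuationRing B]
    (τ : B ≃ₐ[A] B) (m : ℕ) {π : B} (hπ : Irreducible π) :
    ∃ U : Bˣ, (∏ k ∈ range m, (τ ^ k) π) = U * π ^ m := by
  have hirr : ∀ k : ℕ, Irreducible ((τ ^ k) π) := fun k =>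
    (MulEquiv.irreducible_iff (τ ^ k : B ≃ₐ[A] B)).mpr hπ
  have hassoc : ∀ k : ℕ, ∃ u : Bˣ, (τ ^ k) π = π * u := fun k => by
    obtain ⟨u, hu⟩ := IsDiscreteValuationRing.associated_of_irreducible B hπ (hirr k)
    exact ⟨u, hu.symm⟩
  choose u hu using hassoc
  refine ⟨∏ k ∈ range m, u k, ?_⟩
  rw [Finset.prod_congr rfl fun k _ => hu k, Finset.prod_mul_distrib, Finset.prod_const,
    Units.coe_prod, mul_comm, Finset.card_range]

end aux

lemma isUnit_of_isUnit_algebraMap {R S : Type*} (K L : Type*) [CommRing R] [IsDomain R]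
    [IsIntegrallyClosed R] [Field K]
    [Algebra R K] [IsFractionRing R K] [CommRing S] [Field L] [Algebra S L] [Algebra R S]
    [Algebra R L] [Algebra K L] [IsScalarTower R K L] [IsScalarTower R S L]
    [Algebra.IsIntegral R S]
    (x : R) (h : IsUnit (algebraMap R S x)) : IsUnit x := by
  obtain ⟨y, hy⟩ := isUnit_iff_exists_inv.mp h
  have hL : algebraMap K L (algebraMap R K x) * algebraMap S L y = 1 := by
    have := congrArg (algebraMap S L) hy
    rw [map_mul, map_one] at this
    rwa [← IsScalarTower.algebraMap_apply, IsScalarTower.algebraMap_apply R K L] at this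
  have hx0 : algebraMap R K x ≠ 0 := by
    intro h0
    rw [h0, map_zero, zero_mul] at hL
    exact zero_ne_one hL
  have hyL : algebraMap S L y = algebraMap K L (algebraMap R K x)⁻¹ := by
    rw [map_inv₀]
    have hKL : algebraMap K L (algebraMap R K x) ≠ 0 := by
      simpa using (map_ne_zero_iff _ (algebraMap K L).injective).mpr hx0
    field_simp
    linear_combination hL
  have hyint : IsIntegral R (algebraMap S L y) :=
    (Algebra.IsIntegral.isIntegral (R := R) y).map (IsScalarTower.toAlgHom R S L)
  rw [hyL] at hyint
  have hint : IsIntegral R (algebraMap R K x)⁻¹ :=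
    (isIntegral_algebraMap_iff (algebraMap K L).injective).mp hyint
  obtain ⟨w, hw⟩ := IsIntegrallyClosed.isIntegral_iff.mp hint
  refine isUnit_iff_exists_inv.mpr ⟨w, ?_⟩
  apply IsFractionRing.injective R K
  rw [map_mul, map_one, hw, mul_inv_cancel₀ hx0]

lemma ram_index_le_finrank
    {A B F E : Type*} [CommRing A] [CommRing B] [Field F] [Field E]
    [IsDomain A] [IsDomain B] [IsIntegrallyClosed A]
    [IsDiscreteValuationRing A] [IsDiscreteValuationRing B]
    [Algebra A F] [IsFractionRing A F] [Algebra F E] [FiniteDimensional F E]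
    [Algebra B E] [IsFractionRing B E] [Algebra A B] [Algebra A E]
    [IsScalarTower A B E] [IsScalarTower A F E] [Algebra.IsIntegral A B]
    {π : B} (hπ : Irreducible π) {ϖ : A} (hϖ : Irreducible ϖ)
    {e' : ℕ} {u₁ : Bˣ} (hρ : algebraMap A B ϖ = ↑u₁ * π ^ e') :
    e' ≤ Module.finrank F E := by
  classical
  set n := Module.finrank F E with hn
  by_contra hcon
  push_neg at hcon
  have hint : IsIntegral A π := Algebra.IsIntegral.isIntegral π
  set P := minpoly A π with hP
  have hmonic : P.Monic := minpoly.monic hint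
  set d := P.natDegree with hd
  have hdn : d ≤ n := by
    have h1 : minpoly F (algebraMap B E π) = P.map (algebraMap A F) :=
      minpoly.isIntegrallyClosed_eq_field_fractions F E hint
    have h2 := minpoly.natDegree_le (A := F) (algebraMap B E π)
    rw [h1, hmonic.natDegree_map] at h2
    exact h2
  have heval := minpoly.aeval A π
  rw [Polynomial.aeval_eq_sum_range, ← hP, ← hd, Finset.sum_range_succ] at heval
  have htop : P.coeff d • π ^ d = π ^ d := by
    rw [hd, hmonic.coeff_natDegree, one_smul]
  rw [htop] at heval
  set S := (range d).filter (fun j => IsUnit (P.coeff j)) with hS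
  have hsplit := Finset.sum_filter_add_sum_filter_not (range d)
    (fun j => IsUnit (P.coeff j)) (fun j => P.coeff j • π ^ j)
  have hrem : π ^ (n+1) ∣ ∑ j ∈ (range d).filter (fun j => ¬ IsUnit (P.coeff j)),
      P.coeff j • π ^ j := by
    apply Finset.dvd_sum
    intro j hj
    obtain ⟨hjd, hju⟩ := Finset.mem_filter.mp hj
    have hϖdvd : ϖ ∣ P.coeff j := by
      have hm : P.coeff j ∈ maximalIdeal A := (IsLocalRing.mem_maximalIdeal _).mpr hju
      rwa [(IsDiscreteValuationRing.irreducible_iff_uniformizer ϖ).mp hϖ,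
        Ideal.mem_span_singleton] at hm
    obtain ⟨c, hc⟩ := hϖdvd
    rw [Algebra.smul_def, hc, map_mul, hρ]
    have h1 : π ^ (n+1) ∣ π ^ e' := pow_dvd_pow π hcon
    exact ((h1.mul_left _).mul_right _).mul_right _
  obtain ⟨r, hr⟩ := hrem
  rcases S.eq_empty_or_nonempty with hSe | hSne
  · have hzero : ∑ j ∈ S, P.coeff j • π ^ j = 0 := by rw [hSe]; simp
    have hdvd : π ^ (n+1) ∣ π ^ d := by
      refine ⟨-r, ?_⟩
      linear_combination heval + hsplit - hr - hzero
    have := (pow_dvd_pow_iff hπ.ne_zero hπ.not_isUnit).mp hdvd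
    omega
  · set j₀ := S.min' hSne with hj₀
    have hj₀S : j₀ ∈ S := S.min'_mem hSne
    have hj₀d : j₀ < d := Finset.mem_range.mp (Finset.mem_filter.mp hj₀S).1
    have hj₀u : IsUnit (P.coeff j₀) := (Finset.mem_filter.mp hj₀S).2
    have hSsum : ∑ j ∈ S, P.coeff j • π ^ j
        = π ^ j₀ * ∑ j ∈ S, P.coeff j • π ^ (j - j₀) := by
      rw [Finset.mul_sum]
      refine Finset.sum_congr rfl fun j hj => ?_
      have hj₀le : j₀ ≤ j := S.min'_le j hj
      rw [mul_smul_comm, ← pow_add, Nat.add_sub_cancel' hj₀le]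
    set g := (∑ j ∈ S, P.coeff j • π ^ (j - j₀)) + π ^ (d - j₀) with hg
    have hπd : π ^ j₀ * π ^ (d - j₀) = π ^ d := by
      rw [← pow_add, Nat.add_sub_cancel' hj₀d.le]
    have hkey : π ^ j₀ * g + π ^ (n+1) * r = 0 := by
      rw [hg, mul_add, ← hSsum, hπd]
      linear_combination heval + hsplit - hr
    have hgu : IsUnit g := by
      by_contra hgu
      have hgm : π ∣ g - algebraMap A B (P.coeff j₀) := by
        have hrest : g - algebraMap A B (P.coeff j₀)
            = (∑ j ∈ S.erase j₀, P.coeff j • π ^ (j - j₀)) + π ^ (d - j₀) := by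
          rw [hg, ← Finset.add_sum_erase S _ hj₀S, Nat.sub_self, pow_zero, Algebra.smul_def,
            mul_one]
          ring
        rw [hrest]
        apply dvd_add
        · apply Finset.dvd_sum
          intro j hj
          have hjS := Finset.mem_of_mem_erase hj
          have hlt : j₀ < j := lt_of_le_of_ne (S.min'_le j hjS) (Finset.ne_of_mem_erase hj).symm
          have hdj : π ∣ π ^ (j - j₀) := dvd_pow_self π (Nat.sub_ne_zero_of_lt hlt)
          rw [Algebra.smul_def]
          exact hdj.mul_left _
        · exact dvd_pow_self π (Nat.sub_ne_zero_of_lt hj₀d)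
      have hgπ : π ∣ g := by
        have hm : g ∈ maximalIdeal B := (IsLocalRing.mem_maximalIdeal _).mpr hgu
        rwa [(IsDiscreteValuationRing.irreducible_iff_uniformizer π).mp hπ,
          Ideal.mem_span_singleton] at hm
      have hcj : π ∣ algebraMap A B (P.coeff j₀) := by
        have := dvd_sub hgπ hgm
        rwa [sub_sub_cancel] at this
      exact hπ.not_isUnit (isUnit_of_dvd_unit hcj (hj₀u.map (algebraMap A B)))
    have hdvd : π ^ (n+1) ∣ π ^ j₀ * g := ⟨-r, by linear_combination hkey⟩
    have hdvd2 : π ^ (n+1) ∣ π ^ j₀ := by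
      rw [← hgu.unit_spec] at hdvd
      exact Units.dvd_mul_right.mp hdvd
    have := (pow_dvd_pow_iff hπ.ne_zero hπ.not_isUnit).mp hdvd2
    omega

/-- Let `p` be a prime, `F` a finite extension of `ℚ_p`, and `E` a finite Galois extension
of `F`.  With `A = 𝒪_F` and `B = 𝒪_E` the rings of integers, and `eF = e_{F/ℚ_p} = v_F(p)`,
the `i`-th ramification group of `Gal(E/F)` in lower numbering is trivial for every integer
`i ≥ [E:F]·(1 + e_{F/ℚ_p}·log_p [E:F]) - 1`.  Concretely: if `σ ∈ Gal(E/F)` satisfies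
`v_E(σ(x) - x) ≥ i + 1` for all `x ∈ 𝒪_E` (i.e. `σ(x) - x ∈ 𝔪_E^{i+1}`, where `σ` acts on
`𝒪_E` via `galRestrict`), then `σ = 1`.  Equivalently, for every `σ ≠ 1` there is
`x ∈ 𝒪_E` with `v_E(σ(x) - x) ≤ [E:F]·(1 + e_{F/ℚ_p}·log_p [E:F]) - 1`. -/
theorem stmt6 (p : ℕ) [Fact p.Prime]
    (F E A B : Type*) [Field F] [Field E] [CommRing A] [CommRing B]
    -- F is a finite extension of ℚ_p
    [Algebra ℚ_[p] F] [FiniteDimensional ℚ_[p] F]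
    -- E is a finite Galois extension of F, hence a finite extension of ℚ_p
    [Algebra F E] [FiniteDimensional F E] [IsGalois F E]
    [Algebra ℚ_[p] E] [IsScalarTower ℚ_[p] F E]
    -- A is the ring of integers 𝒪_F of F
    [Algebra ℤ_[p] F] [IsScalarTower ℤ_[p] ℚ_[p] F]
    [Algebra ℤ_[p] A] [Algebra A F] [IsScalarTower ℤ_[p] A F]
    [IsFractionRing A F] [IsIntegralClosure A ℤ_[p] F]
    -- B is the ring of integers 𝒪_E of E
    [Algebra A B] [Algebra B E] [Algebra A E] [IsScalarTower A B E] [IsScalarTower A F E]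
    [IsFractionRing B E] [IsIntegralClosure B A E]
    -- the rings of integers are discrete valuation rings
    [IsDomain A] [IsDomain B] [IsIntegrallyClosed A] [IsIntegrallyClosed B]
    [IsDiscreteValuationRing A] [IsDiscreteValuationRing B]
    [IsDedekindDomain B] [Module.Finite A B] [NoZeroSMulDivisors A B]
    -- eF = e_{F/ℚ_p} = v_F(p)
    (eF : ℕ)
    (heF₁ : (p : A) ∈ maximalIdeal A ^ eF)
    (heF₂ : (p : A) ∉ maximalIdeal A ^ (eF + 1)) :
    ∀ i : ℕ,
      (Module.finrank F E : ℝ) *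
          (1 + (eF : ℝ) * Real.logb p (Module.finrank F E)) - 1 ≤ (i : ℝ) →
      ∀ σ : E ≃ₐ[F] E,
        (∀ x : B, galRestrict A F E B σ x - x ∈ maximalIdeal B ^ (i + 1)) → σ = 1 := by
  classical
  intro i hi σ hσ
  have hp : p.Prime := Fact.out
  set n := Module.finrank F E with hn
  have hn0 : 0 < n := Module.finrank_pos
  set τ : B ≃ₐ[A] B := galRestrict A F E B σ with hτdef
  -- it suffices to show τ is the identity on B
  suffices hfix : ∀ x : B, τ x = x by
    ext ξ
    obtain ⟨x, y, hy, rfl⟩ := IsFractionRing.div_surjective (A := B) (K := E) ξ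
    have hmapx : ∀ b : B, σ (algebraMap B E b) = algebraMap B E b := fun b => by
      rw [← algebraMap_galRestrict_apply A σ b, ← hτdef, hfix]
    rw [AlgEquiv.one_apply, map_div₀, hmapx, hmapx]
  -- basic setup
  have hτ1 : τ ^ n = 1 := by
    have hσn : σ ^ n = 1 := by
      rw [hn, ← IsGalois.card_aut_eq_finrank F E]
      exact pow_card_eq_one'
    rw [hτdef, ← map_pow, hσn, map_one]
  obtain ⟨π, hπ⟩ := IsDiscreteValuationRing.exists_irreducible B
  have hdvdiff : ∀ w : B, w ∈ maximalIdeal B ^ (i+1) ↔ π ^ (i+1) ∣ w := by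
    intro w
    rw [(IsDiscreteValuationRing.irreducible_iff_uniformizer π).mp hπ, Ideal.span_singleton_pow,
      Ideal.mem_span_singleton]
  have hτm : ∀ x : B, π ^ (i+1) ∣ (τ x - x) := fun x => (hdvdiff _).mp (hσ x)
  have hABinj : Function.Injective (algebraMap A B) :=
    FaithfulSMul.algebraMap_injective A B
  have hBEinj : Function.Injective (algebraMap B E) := IsFractionRing.injective B E
  haveI hEchar : CharZero E :=
    charZero_of_injective_algebraMap (algebraMap ℚ_[p] E).injective
  have hpB0 : (p : B) ≠ 0 := by
    intro h
    have h2 : ((p : ℕ) : E) = 0 := by rw [← map_natCast (algebraMap B E), h, map_zero]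
    exact Nat.cast_ne_zero.mpr hp.ne_zero h2
  haveI hZA : Algebra.IsIntegral ℤ_[p] A := ⟨fun x => IsIntegralClosure.isIntegral ℤ_[p] F x⟩
  -- p is not a unit in A
  have hpAnu : ¬ IsUnit ((p : A)) := by
    intro h
    have h2 : IsUnit ((p : ℤ_[p])) := by
      apply isUnit_of_isUnit_algebraMap (R := ℤ_[p]) (S := A) ℚ_[p] F ((p : ℕ) : ℤ_[p])
      rwa [map_natCast]
    have h3 := PadicInt.isUnit_iff.mp h2
    rw [PadicInt.norm_p] at h3
    have h4 : (1:ℝ) < p := by exact_mod_cast hp.one_lt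
    have h5 : (0:ℝ) < p := by positivity
    rw [inv_eq_one] at h3
    linarith
  have heF1 : 1 ≤ eF := by
    by_contra h
    have h0 : eF = 0 := by omega
    apply heF₂
    rw [h0, zero_add, pow_one]
    exact (IsLocalRing.mem_maximalIdeal _).mpr hpAnu
  -- uniformizer of A and the decomposition of p in B
  obtain ⟨ϖA, hϖA⟩ := IsDiscreteValuationRing.exists_irreducible A
  have hmaxA : maximalIdeal A = Ideal.span {ϖA} :=
    (IsDiscreteValuationRing.irreducible_iff_uniformizer ϖA).mp hϖA
  have hpdvd : ϖA ^ eF ∣ (p : A) := by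
    rw [hmaxA, Ideal.span_singleton_pow, Ideal.mem_span_singleton] at heF₁
    exact heF₁
  obtain ⟨α, hα⟩ := hpdvd
  have hαu : IsUnit α := by
    by_contra hnu
    apply heF₂
    have hm : α ∈ maximalIdeal A := (IsLocalRing.mem_maximalIdeal _).mpr hnu
    rw [hmaxA, Ideal.mem_span_singleton] at hm
    obtain ⟨c, hc⟩ := hm
    rw [hmaxA, Ideal.span_singleton_pow, Ideal.mem_span_singleton, hα, hc]
    exact ⟨c, by ring⟩
  have hϖAB0 : algebraMap A B ϖA ≠ 0 := fun h =>
    hϖA.ne_zero (hABinj (by rw [h, map_zero]))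
  obtain ⟨e', u₁, hu₁⟩ := IsDiscreteValuationRing.eq_unit_mul_pow_irreducible hϖAB0 hπ
  set D := eF * e' with hD
  have hpB : (p : B) = (algebraMap A B α * (↑u₁)^eF) * π ^ D := by
    have h6 := congrArg (algebraMap A B) hα
    rw [map_natCast, map_mul, map_pow, hu₁] at h6
    rw [h6, hD, mul_pow, ← pow_mul, mul_comm e' eF]
    ring
  have hαBu : IsUnit (algebraMap A B α * (↑u₁)^eF) :=
    (hαu.map _).mul (u₁^eF).isUnit
  have he'1 : 1 ≤ e' := by
    by_contra h
    have h0 : e' = 0 := by omega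
    apply hϖA.not_isUnit
    apply isUnit_of_isUnit_algebraMap (R := A) (S := B) F E ϖA
    rw [hu₁, h0, pow_zero, mul_one]
    exact u₁.isUnit
  have he'n : e' ≤ n := ram_index_le_finrank (F := F) (E := E) hπ hϖA hu₁
  have hpBnu : ¬ IsUnit ((p : B)) := by
    intro h
    rw [hpB] at h
    obtain ⟨W0, hW0⟩ := hαBu
    rw [← hW0] at h
    have h1 : IsUnit (π ^ D) := (Units.isUnit_units_mul W0 _).mp h
    have hD0 : D ≠ 0 := by
      simp only [hD]
      positivity
    exact hπ.not_isUnit (isUnit_of_dvd_unit (dvd_pow_self π hD0) h1)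
  have hpBm : (p : B) ∈ maximalIdeal B := (IsLocalRing.mem_maximalIdeal _).mpr hpBnu
  -- p-part of n
  set a := n.factorization p with ha
  set u := n / p ^ a with hu_def
  have hn_au : p ^ a * u = n := Nat.ordProj_mul_ordCompl_eq_self n p
  have hcop : Nat.Coprime p u := Nat.coprime_ordCompl hp hn0.ne'
  have huB : IsUnit ((u : B)) := by
    have hb := Nat.gcd_eq_gcd_ab p u
    rw [hcop] at hb
    have h1 : (1 : B) = (p : B) * ((Nat.gcdA p u : ℤ) : B) + (u : B) * ((Nat.gcdB p u : ℤ) : B) := by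
      have := congrArg (fun z : ℤ => ((z : ℤ) : B)) hb
      push_cast at this
      simpa using this
    have h2 : IsUnit ((u:B) * ((Nat.gcdB p u : ℤ) : B)) := by
      by_contra h3
      have h4 : (u:B) * ((Nat.gcdB p u : ℤ) : B) ∈ maximalIdeal B :=
        (IsLocalRing.mem_maximalIdeal _).mpr h3
      have h5 : (1:B) ∈ maximalIdeal B := by
        rw [h1]
        exact add_mem (Ideal.mul_mem_right _ _ hpBm) h4
      exact ((IsLocalRing.mem_maximalIdeal _).mp h5) isUnit_one
    exact isUnit_of_mul_isUnit_left h2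
  -- the fixed subalgebra
  set C : Subalgebra A B := AlgHom.equalizer (τ : B →ₐ[A] B) (AlgHom.id A B) with hCdef
  have hmemC : ∀ x : B, x ∈ C ↔ τ x = x := fun x => AlgHom.mem_equalizer _ _ x
  set Tr : B → B := fun x => ∑ k ∈ range n, (τ ^ k) x with hTrdef
  have hTrC : ∀ x, Tr x ∈ C := fun x => (hmemC _).mpr (trace_fixed τ hτ1 x)
  set z := ∏ k ∈ range n, (τ ^ k) π with hzdef
  have hzC : z ∈ C := (hmemC _).mpr (prod_fixed τ hτ1 π hπ.ne_zero)
  obtain ⟨U, hU⟩ := prod_conj_eq_unit_mul_pow τ n hπ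
  rw [← hzdef] at hU
  have hznu : ¬ IsUnit z := by
    intro h
    rw [hU] at h
    have h1 : IsUnit (π ^ n) := (Units.isUnit_units_mul U _).mp h
    exact hπ.not_isUnit (isUnit_of_dvd_unit (dvd_pow_self π hn0.ne') h1)
  -- arithmetic: n + a * D ≤ i + 1
  have haD : n + a * D ≤ i + 1 := by
    have hpR : (1:ℝ) < p := by exact_mod_cast hp.one_lt
    have hpa : ((p:ℝ))^a ≤ (n:ℝ) := by exact_mod_cast Nat.ordProj_le p hn0.ne'
    have hloga : (a : ℝ) ≤ Real.logb p n := by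
      have h1 : Real.logb p ((p:ℝ)^a) = a := by
        rw [Real.logb_pow, Real.logb_self_eq_one hpR, mul_one]
      rw [← h1]
      exact Real.logb_le_logb_of_le hpR (by positivity) hpa
    have h2 : (a:ℝ) * D ≤ Real.logb p n * (eF * n) := by
      have hD2 : (D:ℝ) = (eF:ℝ) * (e':ℝ) := by exact_mod_cast rfl
      have he'R : (e':ℝ) ≤ (n:ℝ) := by exact_mod_cast he'n
      have ha0 : (0:ℝ) ≤ a := by positivity
      have hlog0 : (0:ℝ) ≤ Real.logb p n := le_trans ha0 hloga
      rw [hD2]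
      calc (a:ℝ) * ((eF:ℝ) * (e':ℝ)) ≤ Real.logb p n * ((eF:ℝ) * (e':ℝ)) := by
            apply mul_le_mul_of_nonneg_right hloga
            positivity
        _ ≤ Real.logb p n * ((eF:ℝ) * (n:ℝ)) := by
            apply mul_le_mul_of_nonneg_left _ hlog0
            apply mul_le_mul_of_nonneg_left he'R
            positivity
    have h3 : ((n + a * D : ℕ) : ℝ) ≤ ((i + 1 : ℕ) : ℝ) := by
      push_cast
      nlinarith [hi]
    exact_mod_cast h3
  set N := i + 1 - a * D with hNdef
  have hNn : n ≤ N := by omega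
  have hsum : a * D + N = i + 1 := by omega
  -- main decomposition
  have hmain : ∀ x : B, ∃ c ∈ C, ∃ b : B, x = c + z * b := by
    intro x
    have h1 : π ^ (i+1) ∣ ((n : ℕ) • x - Tr x) := by
      rw [← tele_tau τ hτ1 x]
      exact hτm _
    obtain ⟨b₂, hb₂⟩ := h1
    obtain ⟨uu, huu⟩ := huB
    set v : B := ↑uu⁻¹ with hvdef
    have hvu : v * (u:B) = 1 := by
      rw [hvdef, ← huu]
      exact Units.inv_mul _
    have hvC : v ∈ C := by
      have h2 : τ v * (u:B) = 1 := by
        rw [← map_natCast τ u, ← map_mul, hvu, map_one]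
      have hu0 : ((u:ℕ):B) ≠ 0 := by
        rw [← huu]
        exact uu.ne_zero
      exact (hmemC _).mpr (mul_right_cancel₀ hu0 (h2.trans hvu.symm))
    have hveq : v * (n:B) = (p:B)^a := by
      have h3 : ((n:ℕ):B) = (p:B)^a * (u:B) := by
        rw [← hn_au]
        push_cast
        ring
      rw [h3, mul_comm ((p:B)^a) _, ← mul_assoc, hvu, one_mul]
    set c' : B := v * Tr x with hc'def
    have hc'C : c' ∈ C := C.mul_mem hvC (hTrC x)
    have hc'eq : (p:B)^a * x - c' = π^(i+1) * (v * b₂) := by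
      have h4 := congrArg (fun t => v * t) hb₂
      simp only [nsmul_eq_mul] at h4
      rw [hc'def]
      linear_combination h4 - x * hveq
    obtain ⟨W, hWspec⟩ := hαBu
    have hπi : π ^ (i+1) = (p:B)^a * ((↑W⁻¹ : B))^a * π ^ N := by
      have h5 : (p:B)^a = (W:B)^a * π^(a*D) := by
        rw [hpB, hWspec, mul_pow, ← pow_mul, mul_comm D a]
      have h6 : ((W:B)) * ((↑W⁻¹:B)) = 1 := by
        rw [← Units.val_mul, mul_inv_cancel, Units.val_one]
      calc π ^ (i+1) = 1 * π ^ (i+1) := (one_mul _).symm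
        _ = ((W:B) * (↑W⁻¹:B))^a * (π ^ (a*D) * π ^ N) := by
            rw [h6, one_pow, ← pow_add, hsum]
        _ = (p:B)^a * ((↑W⁻¹ : B))^a * π ^ N := by
            rw [mul_pow, h5]; ring
    set r : B := ((↑W⁻¹ : B))^a * π ^ N * (v * b₂) with hrdef
    have hb₁ : c' = (p:B)^a * (x - r) := by
      rw [mul_sub, hrdef]
      linear_combination -hc'eq - (v * b₂) * hπi
    have hx_r : τ (x - r) = x - r := by
      have h7 : τ c' = c' := (hmemC _).mp hc'C
      rw [hb₁, map_mul, map_pow, map_natCast] at h7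
      exact mul_left_cancel₀ (pow_ne_zero a hpB0) h7
    refine ⟨x - r, (hmemC _).mpr hx_r, (↑U⁻¹ : B) * π^(N-n) * ((↑W⁻¹:B)^a * (v * b₂)), ?_⟩
    have hzr : z * ((↑U⁻¹ : B) * π^(N-n) * ((↑W⁻¹:B)^a * (v * b₂))) = r := by
      have h8 : ((U:B)) * ((↑U⁻¹:B)) = 1 := by
        rw [← Units.val_mul, mul_inv_cancel, Units.val_one]
      have h9 : π ^ n * π ^ (N - n) = π ^ N := by
        rw [← pow_add, Nat.add_sub_cancel' hNn]
      calc z * ((↑U⁻¹ : B) * π^(N-n) * ((↑W⁻¹:B)^a * (v * b₂)))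
          = ((U:B) * (↑U⁻¹:B)) * ((π ^ n * π ^ (N-n)) * ((↑W⁻¹:B)^a * (v * b₂))) := by
            rw [hU]; ring
        _ = r := by rw [h8, h9, hrdef, one_mul]; ring
    rw [hzr]
    ring
  -- C is a local ring and Nakayama finishes the proof
  have hCunit : ∀ c : C, IsUnit ((c : B)) → IsUnit c := by
    intro c hc
    have hcfix : τ ((c:B)) = (c:B) := (hmemC _).mp c.2
    obtain ⟨cu, hcu⟩ := hc
    have h3 : (↑cu⁻¹ : B) * (c:B) = 1 := by
      rw [← hcu]
      exact Units.inv_mul _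
    have hinvC : (↑cu⁻¹ : B) ∈ C := by
      have h2 : τ ((↑cu⁻¹ : B)) * (c:B) = 1 := by
        rw [← hcfix, ← map_mul, h3, map_one]
      have hc0 : (c:B) ≠ 0 := by
        rw [← hcu]
        exact cu.ne_zero
      exact (hmemC _).mpr (mul_right_cancel₀ hc0 (h2.trans h3.symm))
    refine isUnit_iff_exists_inv.mpr ⟨⟨_, hinvC⟩, ?_⟩
    apply Subtype.ext
    have h4 : (c:B) * (↑cu⁻¹ : B) = 1 := by
      rw [← hcu]
      exact Units.mul_inv _
    simpa using h4
  haveI : Nontrivial C := ⟨⟨0, 1, fun h => zero_ne_one (congrArg Subtype.val h)⟩⟩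
  haveI hCloc : IsLocalRing C := by
    apply IsLocalRing.of_nonunits_add
    intro a' b' ha' hb' hab
    have hmem : ∀ c : C, ¬ IsUnit c → (c:B) ∈ maximalIdeal B := by
      intro c hcu
      by_contra h
      exact hcu (hCunit c (by rwa [IsLocalRing.mem_maximalIdeal, mem_nonunits_iff, not_not] at h))
    have h1 : ((a' + b' : C) : B) ∈ maximalIdeal B := by
      have := add_mem (hmem a' ha') (hmem b' hb')
      simpa using this
    have h2 : IsUnit ((a' + b' : C) : B) := hab.map C.val
    exact ((IsLocalRing.mem_maximalIdeal _).mp h1) h2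
  haveI : Module.Finite C B := Module.Finite.of_restrictScalars_finite A C B
  set zC : C := ⟨z, hzC⟩ with hzCdef
  have hzCm : zC ∈ maximalIdeal C := by
    rw [IsLocalRing.mem_maximalIdeal]
    intro huz
    exact hznu (by simpa using huz.map C.val)
  set I : Ideal C := Ideal.span {zC} with hIdef
  have hIj : I ≤ Ideal.jacobson ⊥ := by
    rw [IsLocalRing.jacobson_eq_maximalIdeal ⊥ bot_ne_top]
    rw [hIdef, Ideal.span_le]
    intro t ht
    rw [Set.mem_singleton_iff] at ht
    rw [ht]
    exact hzCm
  set Wsub : Submodule C B := Submodule.span C {1} with hWsubdef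
  have htople : (⊤ : Submodule C B) ≤ Wsub ⊔ I • (⊤ : Submodule C B) := by
    intro x _
    obtain ⟨c, hcC, b, hxe⟩ := hmain x
    have h1 : c ∈ Wsub := by
      apply Submodule.mem_span_singleton.mpr
      refine ⟨⟨c, hcC⟩, ?_⟩
      simp [Algebra.smul_def]
    have h2 : z * b ∈ I • (⊤ : Submodule C B) := by
      have h3 : zC • b = z * b := by
        rw [Algebra.smul_def]
        rfl
      rw [← h3]
      exact Submodule.smul_mem_smul (Ideal.subset_span rfl) trivial
    rw [hxe]
    exact Submodule.add_mem_sup h1 h2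
  have htop : (⊤ : Submodule C B) ≤ Wsub :=
    Submodule.le_of_le_smul_of_le_jacobson_bot Module.Finite.fg_top hIj htople
  intro x
  obtain ⟨c, hc⟩ := Submodule.mem_span_singleton.mp (htop (Submodule.mem_top (x := x)))
  have hxc : x = (c : B) := by
    rw [← hc, Algebra.smul_def, mul_one]
    rfl
  rw [hxc]
  exact (hmemC _).mp c.2
end

section
/- Let Φ : ℝ → ℂ be a Schwartz function whose Fourier transform Φ̂ vanishes outside the interval (−1, 1). Then ∫_ℝ Φ(x)·W(U)(x) dx = Φ̂(0), ∫_ℝ Φ(x)·W(USp)(x) dx = Φ̂(0) − Φ(0)/2, and ∫_ℝ Φ(x)·W(SO(even))(x) dx = Φ̂(0) + Φ(0)/2; that is, ∫_ℝ Φ(x)·(1 − sin(2πx)/(2πx)) dx = Φ̂(0) − Φ(0)/2 and ∫_ℝ Φ(x)·(1 + sin(2πx)/(2πx)) dx = Φ̂(0) + Φ(0)/2. -/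
open MeasureTheory
open scoped FourierTransform

/-- `sin(2πx)/(2πx)`, understood to equal `1` at `x = 0`. -/
noncomputable def sinc2pi (x : ℝ) : ℝ :=
  if x = 0 then 1 else Real.sin (2 * Real.pi * x) / (2 * Real.pi * x)

lemma measurable_sinc2pi : Measurable sinc2pi := by
  unfold sinc2pi
  exact Measurable.ite (by simp [Set.setOf_eq_eq_singleton]) measurable_const
    ((Real.measurable_sin.comp (measurable_id.const_mul _)).div (measurable_id.const_mul _))

lemma abs_sinc2pi_le_one (x : ℝ) : |sinc2pi x| ≤ 1 := by
  unfold sinc2pi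
  split_ifs with h
  · simp
  · rw [abs_div]
    refine div_le_one_of_le₀ Real.abs_sin_le_abs (abs_nonneg _)

lemma fourier_indicator (x : ℝ) :
    𝓕 (Set.indicator (Set.Icc (-1:ℝ) 1) (fun _ => (1:ℂ))) x = 2 * (sinc2pi x : ℂ) := by
  rw [Real.fourier_real_eq_integral_exp_smul]
  have hrw : (fun v : ℝ => Complex.exp (↑(-2 * Real.pi * v * x) * Complex.I) •
      Set.indicator (Set.Icc (-1:ℝ) 1) (fun _ => (1:ℂ)) v)
      = Set.indicator (Set.Icc (-1:ℝ) 1)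
        (fun v : ℝ => Complex.exp ((-2 * Real.pi * x * Complex.I) * v)) := by
    ext v
    by_cases hv : v ∈ Set.Icc (-1:ℝ) 1 <;>
      simp [Set.indicator_of_mem, Set.indicator_of_notMem, hv, smul_eq_mul] <;>
      push_cast <;> ring_nf
  rw [hrw, integral_indicator measurableSet_Icc, MeasureTheory.integral_Icc_eq_integral_Ioc,
    ← intervalIntegral.integral_of_le (by norm_num : (-1:ℝ) ≤ 1)]
  by_cases hx : x = 0
  · subst hx
    simp [sinc2pi]
    norm_num
  · have hθ : (2 * Real.pi * x) ≠ 0 := by exact mul_ne_zero (mul_ne_zero two_ne_zero Real.pi_ne_zero) hx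
    have hc : (-2 * (Real.pi:ℂ) * (x:ℂ) * Complex.I) ≠ 0 :=
      mul_ne_zero (mul_ne_zero (mul_ne_zero (neg_ne_zero.2 two_ne_zero)
        (Complex.ofReal_ne_zero.2 Real.pi_ne_zero)) (Complex.ofReal_ne_zero.2 hx))
        Complex.I_ne_zero
    rw [integral_exp_mul_complex hc]
    have h1 : (-2 * (Real.pi:ℂ) * (x:ℂ) * Complex.I) * ((1:ℝ):ℂ)
        = ((-(2*Real.pi*x) : ℝ) : ℂ) * Complex.I := by push_cast; ring
    have h2 : (-2 * (Real.pi:ℂ) * (x:ℂ) * Complex.I) * (((-1):ℝ):ℂ)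
        = (((2*Real.pi*x) : ℝ) : ℂ) * Complex.I := by push_cast; ring
    rw [h1, h2, Complex.exp_mul_I, Complex.exp_mul_I]
    simp only [sinc2pi, if_neg hx, Complex.ofReal_neg, Complex.cos_neg, Complex.sin_neg,
      ← Complex.ofReal_sin, Complex.ofReal_div]
    have hθc : ((2*Real.pi*x : ℝ) : ℂ) ≠ 0 := Complex.ofReal_ne_zero.2 hθ
    rw [div_eq_iff hc]
    have hπ : (Real.pi : ℂ) ≠ 0 := Complex.ofReal_ne_zero.2 Real.pi_ne_zero
    have hxc : (x : ℂ) ≠ 0 := Complex.ofReal_ne_zero.2 hx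
    push_cast
    field_simp
    ring

/-- Let `Φ : ℝ → ℂ` be a Schwartz function whose Fourier transform `Φ̂` vanishes outside
`(-1, 1)`.  Then `∫ Φ(x) W(U)(x) dx = Φ̂(0)`,
`∫ Φ(x) W(USp)(x) dx = ∫ Φ(x)(1 - sin(2πx)/(2πx)) dx = Φ̂(0) - Φ(0)/2`, and
`∫ Φ(x) W(SO(even))(x) dx = ∫ Φ(x)(1 + sin(2πx)/(2πx)) dx = Φ̂(0) + Φ(0)/2`. -/
theorem stmt10 (Φ : SchwartzMap ℝ ℂ)
    (hsupp : ∀ y : ℝ, y ∉ Set.Ioo (-1 : ℝ) 1 → 𝓕 (⇑Φ) y = 0) :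
    (∫ x : ℝ, Φ x) = 𝓕 (⇑Φ) 0 ∧
    (∫ x : ℝ, Φ x * (1 - (sinc2pi x : ℂ))) = 𝓕 (⇑Φ) 0 - Φ 0 / 2 ∧
    (∫ x : ℝ, Φ x * (1 + (sinc2pi x : ℂ))) = 𝓕 (⇑Φ) 0 + Φ 0 / 2 := by
  have hΦint : Integrable (⇑Φ) := Φ.integrable
  have hFint : Integrable (𝓕 ⇑Φ) := by
    simpa [SchwartzMap.fourier_coe] using (𝓕 Φ).integrable (μ := volume)
  -- first part
  have h0 : 𝓕 (⇑Φ) 0 = ∫ x : ℝ, Φ x := by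
    rw [Real.fourier_eq]
    simp
  -- inversion
  have hinv : Φ 0 = ∫ y : ℝ, 𝓕 (⇑Φ) y := by
    have := hΦint.fourierInv_fourier_eq hFint (Φ.continuous.continuousAt (x := 0))
    rw [← this, Real.fourierInv_eq]
    simp
  -- multiplication formula
  set g : ℝ → ℂ := Set.indicator (Set.Icc (-1:ℝ) 1) (fun _ => (1:ℂ)) with hg
  have hgint : Integrable g := by
    rw [hg, integrable_indicator_iff measurableSet_Icc]
    refine integrableOn_const ?_
    simp [Real.volume_Icc]
  have hflip : (innerₗ ℝ).flip = innerₗ ℝ := by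
    refine LinearMap.ext fun x => LinearMap.ext fun y => ?_
    simpa [LinearMap.flip_apply] using real_inner_comm y x
  have mult := VectorFourier.integral_fourierIntegral_smul_eq_flip (L := innerₗ ℝ)
    (μ := volume) (ν := volume) Real.continuous_fourierChar continuous_inner hΦint hgint
  rw [hflip] at mult
  have lhs_eq : (∫ ξ : ℝ, (VectorFourier.fourierIntegral Real.fourierChar volume (innerₗ ℝ) (⇑Φ) ξ) • g ξ)
      = ∫ ξ : ℝ, 𝓕 (⇑Φ) ξ := by
    congr 1
    ext ξ
    show 𝓕 (⇑Φ) ξ • g ξ = 𝓕 (⇑Φ) ξ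
    by_cases hξ : ξ ∈ Set.Icc (-1:ℝ) 1
    · simp [hg, Set.indicator_of_mem, hξ, smul_eq_mul]
    · have : 𝓕 (⇑Φ) ξ = 0 := by
        apply hsupp
        intro hmem
        exact hξ ⟨le_of_lt hmem.1, le_of_lt hmem.2⟩
      simp [this]
  have rhs_eq : (∫ x : ℝ, Φ x • (VectorFourier.fourierIntegral Real.fourierChar volume (innerₗ ℝ) g x))
      = 2 * ∫ x : ℝ, Φ x * (sinc2pi x : ℂ) := by
    rw [← MeasureTheory.integral_const_mul]
    congr 1
    ext x
    show Φ x • 𝓕 g x = _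
    rw [hg, fourier_indicator x, smul_eq_mul]
    ring
  rw [lhs_eq, rhs_eq, ← hinv] at mult
  -- key identity
  have key : (∫ x : ℝ, Φ x * (sinc2pi x : ℂ)) = Φ 0 / 2 := by
    field_simp
    rw [mult]
    ring
  -- integrability of Φ * sinc
  have hsint : Integrable (fun x : ℝ => Φ x * (sinc2pi x : ℂ)) := by
    have hb : ∀ x : ℝ, ‖(sinc2pi x : ℂ)‖ ≤ 1 := by
      intro x
      rw [Complex.norm_real]
      exact abs_sinc2pi_le_one x
    have := Integrable.bdd_mul hΦint
      ((Complex.measurable_ofReal.comp measurable_sinc2pi).aestronglyMeasurable) (c := 1) (ae_of_all _ hb)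
    simpa [mul_comm] using this
  refine ⟨h0.symm, ?_, ?_⟩
  · calc (∫ x : ℝ, Φ x * (1 - (sinc2pi x : ℂ)))
        = ∫ x : ℝ, (Φ x - Φ x * (sinc2pi x : ℂ)) := by
          congr 1; ext x; ring
      _ = (∫ x : ℝ, Φ x) - ∫ x : ℝ, Φ x * (sinc2pi x : ℂ) := integral_sub hΦint hsint
      _ = 𝓕 (⇑Φ) 0 - Φ 0 / 2 := by rw [← h0, key]
  · calc (∫ x : ℝ, Φ x * (1 + (sinc2pi x : ℂ)))
        = ∫ x : ℝ, (Φ x + Φ x * (sinc2pi x : ℂ)) := by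
          congr 1; ext x; ring
      _ = (∫ x : ℝ, Φ x) + ∫ x : ℝ, Φ x * (sinc2pi x : ℂ) := integral_add hΦint hsint
      _ = 𝓕 (⇑Φ) 0 + Φ 0 / 2 := by rw [← h0, key]
end
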